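/- Suppose the sequence (T_n) satisfies hypotheses (NU1)–(NU4) of the nonstationary nonuniformly expanding setup with constants λ > 1 and K > 0. Then for every K_2 > (1 − λ^{-1})^{-1} K and K_1 = K + λ^{-1} K_2 (so 0 < K_1 < K_2, and K_1, K_2 can be chosen arbitrarily large), the following holds: for each k ≥ 1, each nonnegative measure μ on Y_k with |μ|_{LL,k} ≤ K_2, and each a ∈ P_k with a ⊆ Y_k, one has |(T_{k,k+τ_k(a)-1})_*(μ|_a)|_{LL,k+τ_k(a)} ≤ K_1. -/
import Mathlib


open MeasureTheory Set Filter
open scoped NNReal ENNReal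

noncomputable section

/-- `seqComp T k n = T (k+n-1) ∘ ⋯ ∘ T (k+1) ∘ T k`, i.e. the composition `T_{k,k+n-1}`. -/
def seqComp {α : Type*} (T : ℕ → α → α) (k : ℕ) : ℕ → α → α
  | 0 => id
  | n + 1 => fun x => T (k + n) (seqComp T k n x)

/-- First return time: `τ_k(x) = inf {n ≥ 1 : T_{k,k+n-1}(x) ∈ Y_{k+n}}`. -/
def retTime {α : Type*} (T : ℕ → α → α) (Y : ℕ → Set α) (k : ℕ) (x : α) : ℕ :=
  sInf {n | 1 ≤ n ∧ seqComp T k n x ∈ Y (k + n)}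

/-- `|μ|_{LL} ≤ c`: the measure `μ` has a density `ρ` with respect to `m` whose logarithm is
`c`-Lipschitz on `Y` (equivalently, `ρ y ≤ ρ y' · exp (c · d(y,y'))` for all `y, y' ∈ Y`, which
also correctly encodes the conventions `log 0 = -∞` and `log 0 - log 0 = 0`). -/
def LLBoundedBy {X : Type*} [MetricSpace X] [MeasurableSpace X]
    (m : Measure X) (Y : Set X) (μ : Measure X) (c : ℝ) : Prop :=
  ∃ ρ : X → ℝ, (∀ x, 0 ≤ ρ x) ∧ Measurable ρ ∧
    μ = m.withDensity (fun x => ENNReal.ofReal (ρ x)) ∧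
    ∀ y ∈ Y, ∀ y' ∈ Y, ρ y ≤ ρ y' * Real.exp (c * dist y y')

/-- Nonstationary nonuniformly expanding setup: hypotheses (NU1)–(NU4).
All data is indexed by `k ≥ 1`; the values at `k = 0` are irrelevant. -/
structure NUE (X : Type*) [MetricSpace X] [MeasurableSpace X] [BorelSpace X] where
  /-- the expansion constant `λ > 1` -/
  lam : ℝ
  /-- the distortion constant `K > 0` -/
  K : ℝ
  hlam : 1 < lam
  hK : 0 < K
  /-- `X` is a bounded metric space -/
  bounded : Bornology.IsBounded (univ : Set X)
  /-- the reference sets `Y k` -/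
  Y : ℕ → Set X
  Ymeas : ∀ k, MeasurableSet (Y k)
  /-- the reference probability measures `m k`, with `m k (Y k) = 1` -/
  m : ℕ → Measure X
  mprob : ∀ k, IsProbabilityMeasure (m k)
  mY : ∀ k, 1 ≤ k → m k (Y k) = 1
  /-- the maps `T k` -/
  T : ℕ → X → X
  Tmeas : ∀ k, Measurable (T k)
  /-- the partitions `P k` of `X` -/
  P : ℕ → Set (Set X)
  Pcount : ∀ k, (P k).Countable
  Pmeas : ∀ k, ∀ a ∈ P k, MeasurableSet a
  Pdisj : ∀ k, (P k).PairwiseDisjoint id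
  Pcover : ∀ k, 1 ≤ k → ⋃₀ P k = univ
  /-- `Y k` is `P k`-measurable -/
  PY : ∀ k, 1 ≤ k → ∃ S ⊆ P k, Y k = ⋃₀ S
  /-- the return times take values in `{1, 2, …}` (finite returns) -/
  retFin : ∀ k, 1 ≤ k → ∀ x : X, 1 ≤ retTime T Y k x ∧
    seqComp T k (retTime T Y k x) x ∈ Y (k + retTime T Y k x)
  /-- (NU1) -/
  nu1 : ∀ k, 1 ≤ k → ∀ a ∈ P k, a ⊆ Y k → 0 < m k a
  /-- (NU2) τ_k is constant on partition elements -/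
  nu2 : ∀ k, 1 ≤ k → ∀ a ∈ P k, ∀ x ∈ a, ∀ x' ∈ a, retTime T Y k x = retTime T Y k x'
  /-- (NU3) the first return maps are expanding bijections with log-Lipschitz Jacobians -/
  nu3 : ∀ k, 1 ≤ k → ∀ a ∈ P k, a ⊆ Y k → ∀ n, (∀ x ∈ a, retTime T Y k x = n) →
    Set.BijOn (seqComp T k n) a (Y (k + n)) ∧
    (∀ y ∈ a, ∀ y' ∈ a, lam * dist y y' ≤ dist (seqComp T k n y) (seqComp T k n y')) ∧
    LLBoundedBy (m (k + n)) (Y (k + n)) (Measure.map (seqComp T k n) ((m k).restrict a)) K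
  /-- (NU4) bounded backward expansion -/
  nu4 : ∀ k, 1 ≤ k → ∀ a ∈ P k, ∀ n, (∀ x ∈ a, retTime T Y k x = n) →
    ∀ x ∈ a, ∀ x' ∈ a, ∀ j ≤ n,
      dist (seqComp T k j x) (seqComp T k j x') ≤
        K * dist (seqComp T k n x) (seqComp T k n x')

namespace NUE

variable {X : Type*} [MetricSpace X] [MeasurableSpace X] [BorelSpace X]

/-- the return time `τ_k` -/
def tau (S : NUE X) : ℕ → X → ℕ := retTime S.T S.Y

/-- (NU5): `((T_{k,k+n-1})_* m_k)(Y_{k+n}) ≥ δ₀` for all `k ≥ 1` and `n ≥ n₀`. -/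
def nu5 (S : NUE X) (δ₀ : ℝ) (n₀ : ℕ) : Prop :=
  ∀ k, 1 ≤ k → ∀ n, n₀ ≤ n →
    ENNReal.ofReal δ₀ ≤ Measure.map (seqComp S.T k n) (S.m k) (S.Y (k + n))

/-- `μ` is regular with respect to `T_k, T_{k+1}, …` (with constant `K₁`). -/
def Regular (S : NUE X) (K₁ : ℝ) (k : ℕ) (μ : Measure X) : Prop :=
  ∀ l, 1 ≤ l →
    LLBoundedBy (S.m (k + l)) (S.Y (k + l))
      (Measure.map (seqComp S.T k l) (μ.restrict {x | S.tau k x = l})) K₁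

/-- `μ` has tail bound `r` with respect to `T_k, T_{k+1}, …`. -/
def TailBound (S : NUE X) (k : ℕ) (μ : Measure X) (r : ℕ → ℝ) : Prop :=
  ∀ n : ℕ, μ {x | n ≤ S.tau k x} ≤ ENNReal.ofReal (r n)

/-- the tail function `h^k(n) = m_k(τ_k ≥ n)`. -/
def hTail (S : NUE X) (k n : ℕ) : ℝ := (S.m k {x | n ≤ S.tau k x}).toReal

/-- `h_n^k(ℓ) = C_h (h^k(n+ℓ) + h^{k+1}(n+ℓ-1) + ⋯ + h^{k+n}(ℓ))`. -/
def hnk (S : NUE X) (Ch : ℝ) (k n l : ℕ) : ℝ :=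
  Ch * ∑ i ∈ Finset.range (n + 1), S.hTail (k + i) (n + l - i)

end NUE

private lemma measurable_seqComp {α : Type*} [MeasurableSpace α] {T : ℕ → α → α}
    (hT : ∀ i, Measurable (T i)) (k n : ℕ) : Measurable (seqComp T k n) := by
  induction n with
  | zero => exact measurable_id
  | succ n ih => exact (hT _).comp ih

private lemma map_withDensity_aux {α β : Type*} [MeasurableSpace α] [MeasurableSpace β]
    (μ : Measure α) {f : α → β} {g : β → ℝ≥0∞} (hf : Measurable f) (hg : Measurable g) :
    Measure.map f (μ.withDensity (fun x => g (f x))) = (Measure.map f μ).withDensity g := by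
  ext s hs
  rw [Measure.map_apply hf hs, withDensity_apply _ hs, withDensity_apply _ (hf hs),
    setLIntegral_map hs hg hf]

set_option maxHeartbeats 1000000 in
theorem stmt3 {X : Type*} [MetricSpace X] [MeasurableSpace X] [BorelSpace X]
    (S : NUE X) (K₂ : ℝ) (hK₂ : (1 - S.lam⁻¹)⁻¹ * S.K < K₂)
    (K₁ : ℝ) (hK₁ : K₁ = S.K + S.lam⁻¹ * K₂) :
    0 < K₁ ∧ K₁ < K₂ ∧
    ∀ k, 1 ≤ k → ∀ μ : Measure X, LLBoundedBy (S.m k) (S.Y k) μ K₂ →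
      ∀ a ∈ S.P k, a ⊆ S.Y k → ∀ n, (∀ x ∈ a, S.tau k x = n) →
        LLBoundedBy (S.m (k + n)) (S.Y (k + n))
          (Measure.map (seqComp S.T k n) (μ.restrict a)) K₁ := by
  have hlam0 : (0:ℝ) < S.lam := lt_trans one_pos S.hlam
  have hinvpos : (0:ℝ) < S.lam⁻¹ := inv_pos.mpr hlam0
  have hinvlt : S.lam⁻¹ < 1 := by
    rw [inv_lt_one_iff₀]; right; exact S.hlam
  have h1m : (0:ℝ) < 1 - S.lam⁻¹ := by linarith
  have hK2pos : (0:ℝ) < K₂ :=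
    lt_trans (mul_pos (inv_pos.mpr h1m) S.hK) hK₂
  have hKlt : S.K < (1 - S.lam⁻¹) * K₂ := by
    have := (mul_lt_mul_of_pos_left hK₂ h1m)
    rwa [mul_inv_cancel_left₀ (ne_of_gt h1m)] at this
  have hK1pos : 0 < K₁ := by
    rw [hK₁]; nlinarith [mul_pos hinvpos hK2pos, S.hK]
  refine ⟨hK1pos, by nlinarith, ?_⟩
  intro k hk μ hμ a ha haY n hn
  have hX : Nonempty X := by
    by_contra hX
    haveI := S.mprob k
    have h0 : (S.m k) Set.univ = 1 := measure_univ
    rw [Set.univ_eq_empty_iff.mpr (not_nonempty_iff.mp hX), measure_empty] at h0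
    exact zero_ne_one h0
  obtain ⟨ρ, hρ0, hρm, hρeq, hρlip⟩ := hμ
  obtain ⟨hbij, hexp, hLL⟩ := S.nu3 k hk a ha haY n hn
  obtain ⟨ζ, hζ0, hζm, hζeq, hζlip⟩ := hLL
  set F := seqComp S.T k n with hF
  have hFm : Measurable F := measurable_seqComp S.Tmeas k n
  set inv : X → X := Function.invFunOn F a with hinv
  have hmemY : ∀ y ∈ S.Y (k+n), inv y ∈ a ∧ F (inv y) = y := by
    intro y hy
    have hex : ∃ x ∈ a, F x = y := hbij.surjOn hy
    exact ⟨Function.invFunOn_mem hex, Function.invFunOn_eq hex⟩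
  have hleft : ∀ x ∈ a, inv (F x) = x := fun x hx => hbij.injOn.leftInvOn_invFunOn hx
  have hlip : LipschitzOnWith (Real.toNNReal S.lam⁻¹) inv (S.Y (k+n)) := by
    apply LipschitzOnWith.of_dist_le_mul
    intro y hy y' hy'
    obtain ⟨hmy, hfy⟩ := hmemY y hy
    obtain ⟨hmy', hfy'⟩ := hmemY y' hy'
    have hd := hexp (inv y) hmy (inv y') hmy'
    rw [hfy, hfy'] at hd
    rw [Real.coe_toNNReal _ (le_of_lt hinvpos), inv_mul_eq_div, le_div_iff₀ hlam0, mul_comm]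
    exact hd
  have hinvmeas : Measurable (fun z : S.Y (k+n) => inv (z : X)) :=
    (hlip.continuousOn.restrict).measurable
  set h : X → ℝ :=
    Function.extend (Subtype.val : S.Y (k+n) → X) (fun z => ρ (inv (z : X))) (fun _ => 0)
    with hh
  have hhm : Measurable h :=
    (MeasurableEmbedding.subtype_coe (S.Ymeas (k+n))).measurable_extend
      (hρm.comp hinvmeas) measurable_const
  have hval : ∀ y ∈ S.Y (k+n), h y = ρ (inv y) := by
    intro y hy
    have := Subtype.val_injective.extend_apply
      (fun z : S.Y (k+n) => ρ (inv (z : X))) (fun _ => 0) ⟨y, hy⟩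
    simpa [hh] using this
  have hh0 : ∀ x, 0 ≤ h x := by
    intro x
    by_cases hx : x ∈ S.Y (k+n)
    · rw [hval x hx]; exact hρ0 _
    · rw [hh, Function.extend_apply']
      rintro ⟨z, rfl⟩; exact hx z.2
  have hamem : MeasurableSet a := S.Pmeas k a ha
  refine ⟨fun y => ζ y * h y, fun y => mul_nonneg (hζ0 y) (hh0 y), hζm.mul hhm, ?_, ?_⟩
  · have hae : (fun x => ENNReal.ofReal (ρ x)) =ᵐ[(S.m k).restrict a]
        (fun x => ENNReal.ofReal (h (F x))) := by
      filter_upwards [ae_restrict_mem hamem] with x hx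
      rw [hval (F x) (hbij.mapsTo hx), hleft x hx]
    have e1 : Measure.map F (μ.restrict a) =
        Measure.map F (((S.m k).restrict a).withDensity
          fun x => ENNReal.ofReal (h (F x))) := by
      rw [hρeq, restrict_withDensity hamem, withDensity_congr_ae hae]
    have e2 : Measure.map F (((S.m k).restrict a).withDensity
          fun x => ENNReal.ofReal (h (F x))) =
        (Measure.map F ((S.m k).restrict a)).withDensity
          (fun y => ENNReal.ofReal (h y)) :=
      map_withDensity_aux ((S.m k).restrict a) (f := F)
        (g := fun y => ENNReal.ofReal (h y)) hFm (hhm.ennreal_ofReal)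
    have e3 : ((S.m (k+n)).withDensity fun y => ENNReal.ofReal (ζ y)).withDensity
          (fun y => ENNReal.ofReal (h y)) =
        (S.m (k+n)).withDensity (fun y => ENNReal.ofReal (ζ y * h y)) := by
      have hmul : (fun y => ENNReal.ofReal (ζ y * h y)) =
          (fun y => ENNReal.ofReal (ζ y)) * (fun y => ENNReal.ofReal (h y)) := by
        funext y; exact ENNReal.ofReal_mul (hζ0 y)
      rw [hmul, withDensity_mul _ (hζm.ennreal_ofReal)
        (hhm.ennreal_ofReal)]
    rw [e1, e2, hζeq, e3]
  · intro y hy y' hy'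
    show ζ y * h y ≤ ζ y' * h y' * Real.exp (K₁ * dist y y')
    rw [hval y hy, hval y' hy']
    obtain ⟨hmy, hfy⟩ := hmemY y hy
    obtain ⟨hmy', hfy'⟩ := hmemY y' hy'
    have hdinv : dist (inv y) (inv y') ≤ S.lam⁻¹ * dist y y' := by
      have := hlip.dist_le_mul y hy y' hy'
      rwa [Real.coe_toNNReal _ (le_of_lt hinvpos)] at this
    have h1 : ζ y ≤ ζ y' * Real.exp (S.K * dist y y') := hζlip y hy y' hy'
    have h2 : ρ (inv y) ≤ ρ (inv y') * Real.exp (K₂ * dist (inv y) (inv y')) :=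
      hρlip _ (haY hmy) _ (haY hmy')
    have h3 : Real.exp (K₂ * dist (inv y) (inv y')) ≤
        Real.exp (K₂ * (S.lam⁻¹ * dist y y')) :=
      Real.exp_le_exp.mpr (mul_le_mul_of_nonneg_left hdinv (le_of_lt hK2pos))
    calc ζ y * ρ (inv y)
        ≤ (ζ y' * Real.exp (S.K * dist y y')) *
            (ρ (inv y') * Real.exp (K₂ * (S.lam⁻¹ * dist y y'))) :=
          mul_le_mul h1 (h2.trans (mul_le_mul_of_nonneg_left h3 (hρ0 _))) (hρ0 _)
            (mul_nonneg (hζ0 _) (Real.exp_pos _).le)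
      _ = ζ y' * ρ (inv y') * Real.exp (K₁ * dist y y') := by
          rw [hK₁, add_mul, Real.exp_add]
          have harg : K₂ * (S.lam⁻¹ * dist y y') = S.lam⁻¹ * K₂ * dist y y' := by ring
          rw [harg]; ring


end
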